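/- For an odd positive integer $i \le n$, the leading-coefficient normalization $\frac{(-n)_i\, h^n_{n-i}(t)}{\sqrt{2n-2i+1}}$ is a polynomial in $t$ with integer coefficients, where $h^n_{n-i}(t) = \sum_{k=0}^n d^i_{n,k} t^k$ and $d^i_{n,k} = (-1)^n \frac{\sqrt{2n-2i+1}}{(-n)_i} \frac{(-n)_k (n-i+1)_k}{(k!)^2} \prod_{m=0}^{(i-1)/2}(n+k+1-2m) \prod_{m=0}^{(i-3)/2}(n-k-1-2m)$. -/

import Mathlib

open Finset

/-- Pochhammer symbol `(x)_k = x (x+1) ⋯ (x+k-1)`. -/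
noncomputable def poch (x : ℝ) (k : ℕ) : ℝ := (ascPochhammer ℝ k).eval x

/-- The coefficient `d^i_{n,k}` (for odd `i`): the product
`∏_{m=0}^{(i-1)/2}` has `(i+1)/2` factors and `∏_{m=0}^{(i-3)/2}` has `(i-1)/2` factors. -/
noncomputable def d (n i k : ℕ) : ℝ :=
  (-1) ^ n * Real.sqrt (2 * (n : ℝ) - 2 * i + 1) / poch (-(n : ℝ)) i *
    (poch (-(n : ℝ)) k * poch ((n : ℝ) - i + 1) k / ((k.factorial : ℝ)) ^ 2) *
    (∏ m ∈ Finset.range ((i + 1) / 2), ((n : ℝ) + k + 1 - 2 * m)) *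
    (∏ m ∈ Finset.range ((i - 1) / 2), ((n : ℝ) - k - 1 - 2 * m))

/-- The wavelet polynomial `h^n_{n-i}(t) = ∑_{k=0}^n d^i_{n,k} t^k` on `[0,1)`. -/
noncomputable def h (n i : ℕ) (t : ℝ) : ℝ := ∑ k ∈ Finset.range (n + 1), d n i k * t ^ k

lemma poch_neg_nat (n k : ℕ) : poch (-(n : ℝ)) k = (-1)^k * (k.factorial * n.choose k : ℕ) := by
  unfold poch
  rw [ascPochhammer_eval_neg_eq_descPochhammer, descPochhammer_eval_eq_descFactorial,
    Nat.descFactorial_eq_factorial_mul_choose]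

lemma poch_succ_nat (j k : ℕ) : poch ((j : ℝ) + 1) k = (k.factorial * (j + k).choose k : ℕ) := by
  unfold poch
  have : ((j : ℝ) + 1) = ((j + 1 : ℕ) : ℝ) := by push_cast; ring
  rw [this, ← ascPochhammer_eval_cast, ascPochhammer_nat_eq_ascFactorial,
    Nat.ascFactorial_eq_factorial_mul_choose]

theorem stmt_17 (n i : ℕ) (hodd : Odd i) (hi : 0 < i) (hin : i ≤ n) :
    ∀ k : ℕ, ∃ z : ℤ,
      poch (-(n : ℝ)) i * d n i k / Real.sqrt (2 * (n : ℝ) - 2 * i + 1) = (z : ℝ) := by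
  intro k
  have hiR : (i : ℝ) ≤ n := by exact_mod_cast hin
  have hSpos : (0:ℝ) < Real.sqrt (2 * (n : ℝ) - 2 * i + 1) := Real.sqrt_pos.mpr (by linarith)
  have hS : Real.sqrt (2 * (n : ℝ) - 2 * i + 1) ≠ 0 := ne_of_gt hSpos
  have hA : poch (-(n : ℝ)) i ≠ 0 := by
    rw [poch_neg_nat]
    have : 0 < i.factorial * n.choose i := Nat.mul_pos i.factorial_pos (Nat.choose_pos hin)
    positivity
  have hfac : ((k.factorial : ℝ)) ≠ 0 := Nat.cast_ne_zero.mpr k.factorial_ne_zero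
  refine ⟨(-1)^n * ((-1)^k * (n.choose k) * ((n - i + k).choose k)) *
    (∏ m ∈ Finset.range ((i + 1) / 2), ((n : ℤ) + k + 1 - 2 * m)) *
    (∏ m ∈ Finset.range ((i - 1) / 2), ((n : ℤ) - k - 1 - 2 * m)), ?_⟩
  have hB : poch (-(n : ℝ)) k * poch ((n : ℝ) - i + 1) k / ((k.factorial : ℝ)) ^ 2 =
      (-1)^k * (n.choose k) * ((n - i + k).choose k) := by
    have hni : (n : ℝ) - i = ((n - i : ℕ) : ℝ) := by
      push_cast [hin]; ring
    rw [poch_neg_nat, hni, poch_succ_nat]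
    push_cast
    field_simp
  rw [d, hB]
  rw [div_eq_iff hS]
  push_cast
  field_simp
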